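/- The class of finite Δ-metric spaces has the strong amalgamation property: if A, B, C are finite Δ-metric spaces with A a subspace of both B and C, then there is a Δ-metric space D containing isometric copies of B and C whose intersection is exactly the copy of A. -/
import Mathlib


structure DistanceValueSet (Δ : Set ℝ) : Prop where
  nonempty : Δ.Nonempty
  pos : ∀ d ∈ Δ, 0 < d
  closed_bdd : BddAbove Δ → ∀ x ∈ Δ, ∀ y ∈ Δ, min (x + y) (sSup Δ) ∈ Δ
  closed_unbdd : ¬BddAbove Δ → ∀ x ∈ Δ, ∀ y ∈ Δ, x + y ∈ Δ

def IsDeltaMetric (Δ : Set ℝ) (X : Type*) [MetricSpace X] : Prop :=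
  ∀ x y : X, x ≠ y → dist x y ∈ Δ

section Amalgam

variable {A B C : Type} [MetricSpace A] [MetricSpace B] [MetricSpace C]

/-- The finite set of candidate cross distances between `b : B` and `c : C`. -/
noncomputable def amalSet [Fintype A] (iB : A → B) (iC : A → C) (M : ℝ) (b : B) (c : C) :
    Finset ℝ :=
  insert M ((Finset.univ : Finset A).image fun a => dist b (iB a) + dist (iC a) c)

/-- The amalgam cross distance. -/
noncomputable def amalD [Fintype A] (iB : A → B) (iC : A → C) (M : ℝ) (b : B) (c : C) : ℝ :=
  (amalSet iB iC M b c).min' (Finset.insert_nonempty _ _)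

variable [Fintype A] {iB : A → B} {iC : A → C} {M : ℝ}

theorem amalD_le_M (b : B) (c : C) : amalD iB iC M b c ≤ M :=
  Finset.min'_le _ _ (Finset.mem_insert_self _ _)

theorem amalD_le (b : B) (c : C) (a : A) :
    amalD iB iC M b c ≤ dist b (iB a) + dist (iC a) c :=
  Finset.min'_le _ _ (Finset.mem_insert_of_mem (Finset.mem_image_of_mem _ (Finset.mem_univ a)))

theorem amalD_cases (b : B) (c : C) :
    amalD iB iC M b c = M ∨ ∃ a : A, amalD iB iC M b c = dist b (iB a) + dist (iC a) c := by
  have h := Finset.min'_mem (amalSet iB iC M b c) (Finset.insert_nonempty _ _)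
  unfold amalSet at h
  rw [Finset.mem_insert] at h
  rcases h with h | h
  · exact Or.inl h
  · rcases Finset.mem_image.1 h with ⟨a, _, ha⟩
    exact Or.inr ⟨a, ha.symm⟩

theorem amalD_nonneg (b : B) (c : C) (hM : 0 < M) : 0 ≤ amalD iB iC M b c := by
  rcases amalD_cases (iB := iB) (iC := iC) (M := M) b c with h | ⟨a, h⟩
  · rw [h]; exact hM.le
  · rw [h]; positivity

theorem amalD_pos (b : B) (c : C) (hM : 0 < M) (hc : c ∉ Set.range iC) :
    0 < amalD iB iC M b c := by
  rcases amalD_cases (iB := iB) (iC := iC) (M := M) b c with h | ⟨a, h⟩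
  · rw [h]; exact hM
  · rw [h]
    have h1 : 0 < dist (iC a) c := by
      rw [dist_pos]
      exact fun he => hc ⟨a, he⟩
    have h2 : (0:ℝ) ≤ dist b (iB a) := dist_nonneg
    linarith

theorem amalD_comm_apply (b : B) (c : C) : amalD iB iC M b c = amalD iB iC M b c := rfl

/-- Triangle: cross ≤ B-dist + cross. -/
theorem amalD_tri_B (b b' : B) (c : C) :
    amalD iB iC M b c ≤ dist b b' + amalD iB iC M b' c := by
  rcases amalD_cases (iB := iB) (iC := iC) (M := M) b' c with h | ⟨a, h⟩
  · rw [h]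
    have := amalD_le_M (iB := iB) (iC := iC) (M := M) b c
    have : (0:ℝ) ≤ dist b b' := dist_nonneg
    linarith [amalD_le_M (iB := iB) (iC := iC) (M := M) b c]
  · rw [h]
    have h1 := amalD_le (iB := iB) (iC := iC) (M := M) b c a
    have h2 : dist b (iB a) ≤ dist b b' + dist b' (iB a) := dist_triangle _ _ _
    linarith

/-- Triangle: cross ≤ cross + C-dist. -/
theorem amalD_tri_C (b : B) (c c' : C) :
    amalD iB iC M b c ≤ amalD iB iC M b c' + dist c' c := by
  rcases amalD_cases (iB := iB) (iC := iC) (M := M) b c' with h | ⟨a, h⟩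
  · rw [h]
    have : (0:ℝ) ≤ dist c' c := dist_nonneg
    linarith [amalD_le_M (iB := iB) (iC := iC) (M := M) b c]
  · rw [h]
    have h1 := amalD_le (iB := iB) (iC := iC) (M := M) b c a
    have h2 : dist (iC a) c ≤ dist (iC a) c' + dist c' c := dist_triangle _ _ _
    linarith

/-- Triangle: B-dist ≤ cross + cross. -/
theorem amalD_tri_BB (hiB : Isometry iB) (hiC : Isometry iC) (hM : 0 < M)
    (hMB : ∀ x y : B, dist x y ≤ M) (b b' : B) (c : C) :
    dist b b' ≤ amalD iB iC M b c + amalD iB iC M b' c := by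
  rcases amalD_cases (iB := iB) (iC := iC) (M := M) b c with h | ⟨a, h⟩
  · rw [h]
    linarith [amalD_nonneg (iB := iB) (iC := iC) (M := M) b' c hM, hMB b b']
  rcases amalD_cases (iB := iB) (iC := iC) (M := M) b' c with h' | ⟨a', h'⟩
  · rw [h']
    linarith [amalD_nonneg (iB := iB) (iC := iC) (M := M) b c hM, hMB b b']
  rw [h, h']
  have key : dist (iC a) c + dist (iC a') c ≥ dist (iB a) (iB a') := by
    rw [hiB.dist_eq, ← hiC.dist_eq]
    calc dist (iC a) (iC a') ≤ dist (iC a) c + dist c (iC a') := dist_triangle _ _ _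
      _ = dist (iC a) c + dist (iC a') c := by rw [dist_comm c]
  have h1 : dist b b' ≤ dist b (iB a) + dist (iB a) (iB a') + dist (iB a') b' :=
    dist_triangle4 _ _ _ _
  have h2 : dist (iB a') b' = dist b' (iB a') := dist_comm _ _
  linarith

/-- Triangle: C-dist ≤ cross + cross. -/
theorem amalD_tri_CC (hiB : Isometry iB) (hiC : Isometry iC) (hM : 0 < M)
    (hMC : ∀ x y : C, dist x y ≤ M) (b : B) (c c' : C) :
    dist c c' ≤ amalD iB iC M b c + amalD iB iC M b c' := by
  rcases amalD_cases (iB := iB) (iC := iC) (M := M) b c with h | ⟨a, h⟩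
  · rw [h]
    linarith [amalD_nonneg (iB := iB) (iC := iC) (M := M) b c' hM, hMC c c']
  rcases amalD_cases (iB := iB) (iC := iC) (M := M) b c' with h' | ⟨a', h'⟩
  · rw [h']
    linarith [amalD_nonneg (iB := iB) (iC := iC) (M := M) b c hM, hMC c c']
  rw [h, h']
  have key : dist b (iB a) + dist b (iB a') ≥ dist (iC a) (iC a') := by
    rw [hiC.dist_eq, ← hiB.dist_eq]
    calc dist (iB a) (iB a') ≤ dist (iB a) b + dist b (iB a') := dist_triangle _ _ _
      _ = dist b (iB a) + dist b (iB a') := by rw [dist_comm (iB a) b]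
  have h1 : dist c c' ≤ dist c (iC a) + dist (iC a) (iC a') + dist (iC a') c' :=
    dist_triangle4 _ _ _ _
  have h2 : dist c (iC a) = dist (iC a) c := dist_comm _ _
  linarith

/-- On the image of `A`, the cross distance is the distance in `C`. -/
theorem amalD_apply_iB (hiB : Isometry iB) (hiC : Isometry iC)
    (hMC : ∀ x y : C, dist x y ≤ M) (a : A) (c : C) :
    amalD iB iC M (iB a) c = dist (iC a) c := by
  apply le_antisymm
  · have := amalD_le (iB := iB) (iC := iC) (M := M) (iB a) c a
    simpa using this
  · apply Finset.le_min'
    intro y hy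
    unfold amalSet at hy
    rw [Finset.mem_insert] at hy
    rcases hy with rfl | hy
    · exact hMC _ _
    · rcases Finset.mem_image.1 hy with ⟨a', _, rfl⟩
      have : dist (iB a) (iB a') = dist (iC a) (iC a') := by
        rw [hiB.dist_eq, hiC.dist_eq]
      rw [this]
      calc dist (iC a) c ≤ dist (iC a) (iC a') + dist (iC a') c := dist_triangle _ _ _

theorem amalD_mem (hΔ : DistanceValueSet Δ) (hB : IsDeltaMetric Δ B) (hC : IsDeltaMetric Δ C)
    (hMΔ : M ∈ Δ) (hMsup : BddAbove Δ → M = sSup Δ)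
    (b : B) (c : C) (hc : c ∉ Set.range iC) :
    amalD iB iC M b c ∈ Δ := by
  rcases amalD_cases (iB := iB) (iC := iC) (M := M) b c with h | ⟨a, h⟩
  · rw [h]; exact hMΔ
  · by_cases hba : b = iB a
    · rw [h, hba, dist_self, zero_add]
      exact hC _ _ (fun he => hc ⟨a, he⟩)
    · have hx : dist b (iB a) ∈ Δ := hB _ _ hba
      have hy : dist (iC a) c ∈ Δ := hC _ _ (fun he => hc ⟨a, he⟩)
      by_cases hbdd : BddAbove Δ
      · have hle : amalD iB iC M b c ≤ sSup Δ :=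
          (amalD_le_M (iB := iB) (iC := iC) (M := M) b c).trans_eq (hMsup hbdd)
        have hmem := hΔ.closed_bdd hbdd _ hx _ hy
        rw [min_eq_left (h ▸ hle)] at hmem
        rw [h]; exact hmem
      · rw [h]; exact hΔ.closed_unbdd hbdd _ hx _ hy

end Amalgam

/-- Strong amalgamation for the class of finite Δ-metric spaces. -/
theorem stmt_0 (Δ : Set ℝ) (hΔ : DistanceValueSet Δ)
    (A B C : Type) [MetricSpace A] [MetricSpace B] [MetricSpace C]
    [Finite A] [Finite B] [Finite C]
    (hA : IsDeltaMetric Δ A) (hB : IsDeltaMetric Δ B) (hC : IsDeltaMetric Δ C)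
    (iB : A → B) (iC : A → C) (hiB : Isometry iB) (hiC : Isometry iC) :
    ∃ (D : Type) (_ : MetricSpace D) (jB : B → D) (jC : C → D),
      Finite D ∧ IsDeltaMetric Δ D ∧ Isometry jB ∧ Isometry jC ∧
      (∀ a : A, jB (iB a) = jC (iC a)) ∧
      Set.range jB ∩ Set.range jC = Set.range (jB ∘ iB) := by
  classical
  have := Fintype.ofFinite A
  -- choose the fallback value M ∈ Δ dominating all distances in B and C
  obtain ⟨M, hMΔ, hMB, hMC, hMsup⟩ :
      ∃ M ∈ Δ, (∀ x y : B, dist x y ≤ M) ∧ (∀ x y : C, dist x y ≤ M) ∧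
        (BddAbove Δ → M = sSup Δ) := by
    obtain ⟨δ₀, hδ₀⟩ := hΔ.nonempty
    have hδ₀pos := hΔ.pos δ₀ hδ₀
    by_cases hbdd : BddAbove Δ
    · have hsup_mem : sSup Δ ∈ Δ := by
        have hδle : δ₀ ≤ sSup Δ := le_csSup hbdd hδ₀
        obtain ⟨x, hxΔ, hx⟩ : ∃ x ∈ Δ, sSup Δ - δ₀ < x := by
          rcases lt_or_ge (sSup Δ - δ₀) δ₀ with h | h
          · exact ⟨δ₀, hδ₀, h⟩
          · exact exists_lt_of_lt_csSup hΔ.nonempty (by linarith)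
        have := hΔ.closed_bdd hbdd x hxΔ δ₀ hδ₀
        have hxle : x ≤ sSup Δ := le_csSup hbdd hxΔ
        rwa [min_eq_right (by linarith)] at this
      refine ⟨sSup Δ, hsup_mem, ?_, ?_, fun _ => rfl⟩
      · intro x y
        by_cases h : x = y
        · subst h; rw [dist_self]; linarith [le_csSup hbdd hδ₀]
        · exact le_csSup hbdd (hB x y h)
      · intro x y
        by_cases h : x = y
        · subst h; rw [dist_self]; linarith [le_csSup hbdd hδ₀]
        · exact le_csSup hbdd (hC x y h)
    · -- unbounded: pick something huge
      set MB := sSup (Set.range fun p : B × B => dist p.1 p.2) with hMBdef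
      set MC := sSup (Set.range fun p : C × C => dist p.1 p.2) with hMCdef
      have hMBb : ∀ x y : B, dist x y ≤ MB := fun x y =>
        le_csSup (Set.finite_range _).bddAbove ⟨(x, y), rfl⟩
      have hMCc : ∀ x y : C, dist x y ≤ MC := fun x y =>
        le_csSup (Set.finite_range _).bddAbove ⟨(x, y), rfl⟩
      have hMB0 : 0 ≤ MB := Real.sSup_nonneg (by rintro x ⟨p, rfl⟩; exact dist_nonneg)
      have hMC0 : 0 ≤ MC := Real.sSup_nonneg (by rintro x ⟨p, rfl⟩; exact dist_nonneg)
      obtain ⟨M, hMΔ, hM⟩ : ∃ M ∈ Δ, MB + MC < M := by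
        rcases not_bddAbove_iff.1 hbdd (MB + MC) with ⟨M, hMΔ, hM⟩
        exact ⟨M, hMΔ, hM⟩
      exact ⟨M, hMΔ, fun x y => by linarith [hMBb x y], fun x y => by linarith [hMCc x y],
        fun h => absurd h hbdd⟩
  have hMpos : 0 < M := hΔ.pos M hMΔ
  -- the amalgam
  set D := B ⊕ {c : C // c ∉ Set.range iC} with hD
  let d : D → D → ℝ := fun x y =>
    match x, y with
    | Sum.inl b, Sum.inl b' => dist b b'
    | Sum.inl b, Sum.inr c => amalD iB iC M b c.1
    | Sum.inr c, Sum.inl b => amalD iB iC M b c.1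
    | Sum.inr c, Sum.inr c' => dist c.1 c'.1
  letI : MetricSpace D :=
    { dist := d
      dist_self := by rintro (b | c) <;> simp [d]
      dist_comm := by rintro (b | c) (b' | c') <;> simp [d, dist_comm]
      dist_triangle := by
        rintro (b | c) (b' | c') (b'' | c'')
        · exact dist_triangle b b' b''
        · exact amalD_tri_B b b' c''.1
        · exact amalD_tri_BB hiB hiC hMpos hMB b b'' c'.1
        · exact amalD_tri_C b c''.1 c'.1
        · calc amalD iB iC M b'' c.1 ≤ dist b'' b' + amalD iB iC M b' c.1 :=
              amalD_tri_B b'' b' c.1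
            _ = amalD iB iC M b' c.1 + dist b' b'' := by rw [add_comm, dist_comm]
        · exact amalD_tri_CC hiB hiC hMpos hMC b' c.1 c''.1
        · calc amalD iB iC M b'' c.1 ≤ amalD iB iC M b'' c'.1 + dist c'.1 c.1 :=
              amalD_tri_C b'' c.1 c'.1
            _ = dist c.1 c'.1 + amalD iB iC M b'' c'.1 := by rw [add_comm, dist_comm]
        · exact dist_triangle c.1 c'.1 c''.1
      eq_of_dist_eq_zero := by
        rintro (b | c) (b' | c') h
        · simp only [d] at h
          exact congrArg Sum.inl (eq_of_dist_eq_zero h)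
        · have h' : amalD iB iC M b c'.1 = 0 := h
          exact absurd h' (amalD_pos b c'.1 hMpos c'.2).ne'
        · have h' : amalD iB iC M b' c.1 = 0 := h
          exact absurd h' (amalD_pos b' c.1 hMpos c.2).ne'
        · simp only [d] at h
          exact congrArg Sum.inr (Subtype.ext (eq_of_dist_eq_zero h)) }
  have hdist_ll : ∀ b b' : B, dist (Sum.inl b : D) (Sum.inl b') = dist b b' := fun _ _ => rfl
  have hdist_lr : ∀ (b : B) (c : {c : C // c ∉ Set.range iC}),
      dist (Sum.inl b : D) (Sum.inr c) = amalD iB iC M b c.1 := fun _ _ => rfl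
  have hdist_rr : ∀ c c' : {c : C // c ∉ Set.range iC},
      dist (Sum.inr c : D) (Sum.inr c') = dist c.1 c'.1 := fun _ _ => rfl
  let jB : B → D := Sum.inl
  let jC : C → D := fun c =>
    if h : c ∈ Set.range iC then Sum.inl (iB h.choose) else Sum.inr ⟨c, h⟩
  have hjC_mem : ∀ (c : C) (h : c ∈ Set.range iC), jC c = Sum.inl (iB h.choose) := by
    intro c h; exact dif_pos h
  have hjC_not : ∀ (c : C) (h : c ∉ Set.range iC), jC c = Sum.inr ⟨c, h⟩ := by
    intro c h; exact dif_neg h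
  have hcomm : ∀ a : A, jB (iB a) = jC (iC a) := by
    intro a
    have h : iC a ∈ Set.range iC := ⟨a, rfl⟩
    rw [hjC_mem _ h]
    have : h.choose = a := hiC.injective h.choose_spec
    rw [this]
  refine ⟨D, inferInstance, jB, jC, ?_, ?_, ?_, ?_, hcomm, ?_⟩
  · infer_instance
  · -- IsDeltaMetric
    rintro (b | c) (b' | c') hne
    · rw [hdist_ll]
      exact hB b b' (fun h => hne (congrArg Sum.inl h))
    · exact amalD_mem hΔ hB hC hMΔ hMsup b c'.1 c'.2
    · rw [show dist (Sum.inr c : D) (Sum.inl b') = amalD iB iC M b' c.1 from rfl]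
      exact amalD_mem hΔ hB hC hMΔ hMsup b' c.1 c.2
    · rw [hdist_rr]
      exact hC c.1 c'.1 (fun h => hne (congrArg Sum.inr (Subtype.ext h)))
  · exact Isometry.of_dist_eq fun x y => rfl
  · -- jC isometry
    apply Isometry.of_dist_eq
    intro c c'
    by_cases h : c ∈ Set.range iC
    · by_cases h' : c' ∈ Set.range iC
      · rw [hjC_mem _ h, hjC_mem _ h', hdist_ll, hiB.dist_eq, ← hiC.dist_eq,
          h.choose_spec, h'.choose_spec]
      · rw [hjC_mem _ h, hjC_not _ h', hdist_lr,
          amalD_apply_iB hiB hiC hMC h.choose c', h.choose_spec]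
    · by_cases h' : c' ∈ Set.range iC
      · rw [hjC_not _ h, hjC_mem _ h', dist_comm,
          hdist_lr, amalD_apply_iB hiB hiC hMC h'.choose c, h'.choose_spec, dist_comm]
      · rw [hjC_not _ h, hjC_not _ h', hdist_rr]
  · -- range condition
    apply Set.Subset.antisymm
    · rintro x ⟨⟨b, rfl⟩, ⟨c, hc⟩⟩
      by_cases h : c ∈ Set.range iC
      · obtain ⟨a, rfl⟩ := h
        exact ⟨a, by rw [Function.comp_apply, hcomm a, hc]⟩
      · rw [hjC_not _ h] at hc
        exact absurd hc (by simp [jB])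
    · rintro x ⟨a, rfl⟩
      exact ⟨⟨iB a, rfl⟩, ⟨iC a, (hcomm a).symm⟩⟩
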